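/- Let \alpha_0,\alpha_1,\alpha_2,\alpha_3 be the standard basis of A_L = (F_3)^4 and define v = \sum_{\alpha} c_\alpha e_\alpha in C[A_L] where c_\alpha = \prod_{i=0}^3 \langle \alpha, \alpha_i \rangle interpreted as +1, 0, -1 according to whether the product of the four coordinates of \alpha in F_3 equals 1, 0, 2 respectively. Then \rho(S)v = v and \rho(T)v = \omega v, where \rho is the Weil representation on C[(F_3)^4] and \omega = e^{2\pi i/3}. -/

import Mathlib

/-- The discriminant quadratic form `q_L(x) = (2/3)(x₁² - x₂² - x₃² - x₄²)`
on `A_L = (F₃)⁴`, coordinates lifted to `{-1,0,1} ⊂ ℤ`. -/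
noncomputable def qLform (v : Fin 4 → ZMod 3) : ℚ :=
  (2 / 3) * (((v 0).valMinAbs : ℚ) ^ 2 - ((v 1).valMinAbs : ℚ) ^ 2 -
    ((v 2).valMinAbs : ℚ) ^ 2 - ((v 3).valMinAbs : ℚ) ^ 2)

/-- The associated bilinear form `b(x,y) = (2/3)(x₁y₁ - x₂y₂ - x₃y₃ - x₄y₄)`. -/
noncomputable def bLform (x y : Fin 4 → ZMod 3) : ℚ :=
  (2 / 3) * (((x 0).valMinAbs : ℚ) * ((y 0).valMinAbs : ℚ) -
    ((x 1).valMinAbs : ℚ) * ((y 1).valMinAbs : ℚ) -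
    ((x 2).valMinAbs : ℚ) * ((y 2).valMinAbs : ℚ) -
    ((x 3).valMinAbs : ℚ) * ((y 3).valMinAbs : ℚ))

/-- The matrix of `ρ(T)` in the Weil representation. -/
noncomputable def weilT : Matrix (Fin 4 → ZMod 3) (Fin 4 → ZMod 3) ℂ :=
  Matrix.diagonal fun α => Complex.exp ((Real.pi : ℂ) * Complex.I * ((qLform α : ℚ) : ℂ))

/-- The matrix of `ρ(S)` in the Weil representation. -/
noncomputable def weilS : Matrix (Fin 4 → ZMod 3) (Fin 4 → ZMod 3) ℂ :=
  Matrix.of fun δ α =>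
    (-1 / 9 : ℂ) * Complex.exp (-(Real.pi : ℂ) * Complex.I * ((bLform δ α : ℚ) : ℂ))

/-- The coefficient vector `v = ∑ c_α e_α` where `c_α` is `1, 0, -1`
according as the product of the four coordinates of `α` in `F₃` is
`1, 0, 2` (i.e. `c_α` is the lift of `∏ᵢ αᵢ` to `{-1,0,1}`). -/
noncomputable def specialVec (α : Fin 4 → ZMod 3) : ℂ :=
  (((∏ i, α i).valMinAbs : ℤ) : ℂ)

-- auxiliary
noncomputable def omg : ℂ := Complex.exp (2 * Real.pi * Complex.I / 3)

lemma omg_ne_zero : omg ≠ 0 := Complex.exp_ne_zero _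

lemma omg_cube : omg ^ 3 = 1 := by
  rw [omg, ← Complex.exp_nat_mul]
  rw [show ((3:ℕ):ℂ) * (2 * Real.pi * Complex.I / 3) = 2 * Real.pi * Complex.I by push_cast; ring]
  exact Complex.exp_two_pi_mul_I

lemma omg_ne_one : omg ≠ 1 := by
  intro h
  rw [omg, Complex.exp_eq_one_iff] at h
  obtain ⟨n, hn⟩ := h
  have hπ : (Real.pi : ℂ) ≠ 0 := by exact_mod_cast Real.pi_ne_zero
  have h2 : ((3 * n - 1 : ℤ) : ℂ) * (2 * Real.pi * Complex.I) = 0 := by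
    push_cast
    field_simp at hn
    linear_combination (-(2 * (Real.pi : ℂ) * Complex.I)) * hn
  have h3 : ((3 * n - 1 : ℤ) : ℂ) = 0 := by
    rcases mul_eq_zero.1 h2 with h | h
    · exact h
    · exact absurd h (mul_ne_zero (mul_ne_zero two_ne_zero hπ) Complex.I_ne_zero)
  have : (3 * n - 1 : ℤ) = 0 := by exact_mod_cast h3
  omega

lemma omg_sum : 1 + omg + omg ^ 2 = 0 := by
  have h := omg_cube
  have h2 : (omg - 1) * (omg ^ 2 + omg + 1) = 0 := by linear_combination h
  rcases mul_eq_zero.1 h2 with h | h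
  · exact absurd (sub_eq_zero.1 h) omg_ne_one
  · linear_combination h

lemma omg_zpow_eq (N : ℤ) (k : ZMod 3) (h : (N : ZMod 3) = k) :
    omg ^ N = omg ^ k.val := by
  have hd : (3 : ℤ) ∣ N - k.val := by
    have : ((N - k.val : ℤ) : ZMod 3) = 0 := by push_cast [h]; simp
    exact_mod_cast (ZMod.intCast_zmod_eq_zero_iff_dvd _ 3).1 this
  obtain ⟨m, hm⟩ := hd
  have hN : N = (k.val : ℤ) + 3 * m := by omega
  rw [hN, zpow_add₀ omg_ne_zero, zpow_natCast]
  rw [show ((3 * m : ℤ)) = (3 : ℤ) * m from rfl, zpow_mul, show ((3:ℤ)) = ((3:ℕ):ℤ) from rfl,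
    zpow_natCast, omg_cube, one_zpow, mul_one]

def gfun (δ α : Fin 4 → ZMod 3) : ZMod 3 :=
  -(δ 0 * α 0 - δ 1 * α 1 - δ 2 * α 2 - δ 3 * α 3)

def Acoef (δ : Fin 4 → ZMod 3) (j : ZMod 3) : ℤ :=
  ∑ α ∈ Finset.univ.filter (fun α : Fin 4 → ZMod 3 => gfun δ α = j), (∏ i, α i).valMinAbs

set_option maxRecDepth 4000 in
lemma key_S : ∀ δ : Fin 4 → ZMod 3,
    Acoef δ 0 - Acoef δ 2 = -9 * (∏ i, δ i).valMinAbs ∧ Acoef δ 1 = Acoef δ 2 := by decide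

lemma key_T : ∀ α : Fin 4 → ZMod 3,
    (∏ i, α i).valMinAbs = 0 ∨ (α 0 ^ 2 - α 1 ^ 2 - α 2 ^ 2 - α 3 ^ 2 : ZMod 3) = 1 := by decide

lemma exp_bL (δ α : Fin 4 → ZMod 3) :
    Complex.exp (-(Real.pi : ℂ) * Complex.I * ((bLform δ α : ℚ) : ℂ)) =
      omg ^ (gfun δ α).val := by
  set M : ℤ := (δ 0).valMinAbs * (α 0).valMinAbs - (δ 1).valMinAbs * (α 1).valMinAbs -
    (δ 2).valMinAbs * (α 2).valMinAbs - (δ 3).valMinAbs * (α 3).valMinAbs with hM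
  have hb : ((bLform δ α : ℚ) : ℂ) = 2 * (M : ℂ) / 3 := by
    rw [bLform, hM]; push_cast; ring
  have harg : -(Real.pi : ℂ) * Complex.I * ((bLform δ α : ℚ) : ℂ)
      = ((-M : ℤ) : ℂ) * (2 * Real.pi * Complex.I / 3) := by
    rw [hb]; push_cast; ring
  rw [harg, Complex.exp_int_mul]
  rw [show Complex.exp (2 * Real.pi * Complex.I / 3) = omg from rfl]
  apply omg_zpow_eq
  rw [hM, gfun]
  push_cast [ZMod.coe_valMinAbs]
  ring

lemma exp_qL (α : Fin 4 → ZMod 3)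
    (h : (α 0 ^ 2 - α 1 ^ 2 - α 2 ^ 2 - α 3 ^ 2 : ZMod 3) = 1) :
    Complex.exp ((Real.pi : ℂ) * Complex.I * ((qLform α : ℚ) : ℂ)) = omg := by
  set Q : ℤ := (α 0).valMinAbs ^ 2 - (α 1).valMinAbs ^ 2 - (α 2).valMinAbs ^ 2 -
    (α 3).valMinAbs ^ 2 with hQ
  have hq : ((qLform α : ℚ) : ℂ) = 2 * (Q : ℂ) / 3 := by
    rw [qLform, hQ]; push_cast; ring
  have harg : (Real.pi : ℂ) * Complex.I * ((qLform α : ℚ) : ℂ)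
      = (Q : ℂ) * (2 * Real.pi * Complex.I / 3) := by
    rw [hq]; push_cast; ring
  rw [harg, Complex.exp_int_mul]
  rw [show Complex.exp (2 * Real.pi * Complex.I / 3) = omg from rfl]
  have : ((Q : ℤ) : ZMod 3) = (1 : ZMod 3) := by
    rw [hQ, ← h]; push_cast [ZMod.coe_valMinAbs]; ring
  rw [omg_zpow_eq Q 1 this, show ((1 : ZMod 3)).val = 1 from rfl, pow_one]

/-- For the special vector `v`, one has `ρ(S)v = v` and `ρ(T)v = ωv`,
where `ω = e^{2πi/3}`. -/
theorem weil_representation_special_vector :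
    Matrix.mulVec weilS specialVec = specialVec ∧
    Matrix.mulVec weilT specialVec =
      fun α => Complex.exp (2 * Real.pi * Complex.I / 3) * specialVec α := by
  constructor
  · funext δ
    have expand : Matrix.mulVec weilS specialVec δ =
        ∑ α : Fin 4 → ZMod 3, (-1 / 9 : ℂ) *
          Complex.exp (-(Real.pi : ℂ) * Complex.I * ((bLform δ α : ℚ) : ℂ)) * specialVec α := by
      simp [Matrix.mulVec, dotProduct, weilS]
    rw [expand]
    have step1 : ∀ α, (-1 / 9 : ℂ) *
        Complex.exp (-(Real.pi : ℂ) * Complex.I * ((bLform δ α : ℚ) : ℂ)) * specialVec α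
        = (-1 / 9 : ℂ) * (omg ^ (gfun δ α).val * specialVec α) := by
      intro α; rw [exp_bL]; ring
    rw [Finset.sum_congr rfl fun α _ => step1 α, ← Finset.mul_sum]
    rw [← Finset.sum_fiberwise Finset.univ (gfun δ)
        (fun α => omg ^ (gfun δ α).val * specialVec α)]
    have inner : ∀ j : ZMod 3,
        (∑ α ∈ Finset.univ.filter (fun α => gfun δ α = j),
          omg ^ (gfun δ α).val * specialVec α) = omg ^ j.val * ((Acoef δ j : ℤ) : ℂ) := by
      intro j
      rw [Acoef]
      push_cast
      rw [Finset.mul_sum]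
      apply Finset.sum_congr rfl
      intro α hα
      have : gfun δ α = j := (Finset.mem_filter.1 hα).2
      rw [this, specialVec]
    rw [Finset.sum_congr rfl fun j _ => inner j]
    have huniv : (Finset.univ : Finset (ZMod 3)) = {0, 1, 2} := by decide
    rw [huniv, Finset.sum_insert (by decide), Finset.sum_insert (by decide),
      Finset.sum_singleton]
    have hkey := key_S δ
    have h1 : ((Acoef δ 0 : ℤ) : ℂ) - ((Acoef δ 2 : ℤ) : ℂ)
        = -9 * (((∏ i, δ i).valMinAbs : ℤ) : ℂ) := by exact_mod_cast hkey.1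
    have h2 : ((Acoef δ 1 : ℤ) : ℂ) = ((Acoef δ 2 : ℤ) : ℂ) := by exact_mod_cast hkey.2
    have hv0 : ((0 : ZMod 3)).val = 0 := rfl
    have hv1 : ((1 : ZMod 3)).val = 1 := rfl
    have hv2 : ((2 : ZMod 3)).val = 2 := rfl
    rw [hv0, hv1, hv2, specialVec]
    linear_combination (-1/9 : ℂ) * h1 + (-omg/9) * h2 +
      (-((Acoef δ 2 : ℤ) : ℂ)/9) * omg_sum
  · funext α
    rw [show Matrix.mulVec weilT specialVec α =
        Complex.exp ((Real.pi : ℂ) * Complex.I * ((qLform α : ℚ) : ℂ)) * specialVec α by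
      simp [weilT, Matrix.mulVec_diagonal]]
    rcases key_T α with h | h
    · rw [specialVec, h]; simp
    · rw [exp_qL α h, omg]
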